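/- Let ℓ₁,…,ℓₙ : ℝ^d → ℝ (n ≥ 2) be differentiable with ‖∇ℓⱼ(w)‖ ≤ L for all w and all j. Define f_S = (1/n)·Σ_{j=1}^n ℓⱼ and, for a fixed i, f_{S^i} = (1/(n−1))·Σ_{j≠i} ℓⱼ. Suppose both f_S and f_{S^i} attain their infima f_S* and f_{S^i}*, and both satisfy the PL condition with parameter μ > 0. Let w₁* be a global minimizer of f_S and w₂* a global minimizer of f_{S^i}. Then |ℓᵢ(w₁*) − ℓᵢ(w₂*)| ≤ L²/(μn) + L²/(μ(n−1)). -/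

import Mathlib

open Finset

lemma norm_gradient_eq_norm_fderiv {E : Type*} [NormedAddCommGroup E]
    [InnerProductSpace ℝ E] [CompleteSpace E] (f : E → ℝ) (x : E) :
    ‖gradient f x‖ = ‖fderiv ℝ f x‖ := by
  rw [gradient]
  exact LinearIsometryEquiv.norm_map _ _

/-- **Pointwise stability of exact minimizers under PL (middle term bound).**
If the empirical risk `f_S` and the leave-one-out risk `f_{S^i}` both attain their infima
and satisfy the PL condition with parameter `μ > 0`, and all gradients of the losses are
bounded by `L`, then the loss `ℓ i` differs at the two minimizers by at most
`L²/(μn) + L²/(μ(n−1))`. -/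
theorem pl_pointwise_stability_minimizers (d n : ℕ) (hn : 2 ≤ n) (i : Fin n) (L μ : ℝ)
    (ℓ : Fin n → EuclideanSpace ℝ (Fin d) → ℝ)
    (hdiff : ∀ j, Differentiable ℝ (ℓ j))
    (hgrad : ∀ j w, ‖gradient (ℓ j) w‖ ≤ L)
    (hμ : 0 < μ)
    (fS fSi : EuclideanSpace ℝ (Fin d) → ℝ)
    (hfS : fS = fun w => (1 / (n : ℝ)) * ∑ j, ℓ j w)
    (hfSi : fSi = fun w => (1 / ((n : ℝ) - 1)) * ∑ j ∈ univ.erase i, ℓ j w)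
    (w₁ w₂ : EuclideanSpace ℝ (Fin d))
    (hw₁ : ∀ y, fS w₁ ≤ fS y)
    (hw₂ : ∀ y, fSi w₂ ≤ fSi y)
    (hPLS : ∀ x, μ * (fS x - fS w₁) ≤ ‖gradient fS x‖ ^ 2)
    (hPLSi : ∀ x, μ * (fSi x - fSi w₂) ≤ ‖gradient fSi x‖ ^ 2) :
    |ℓ i w₁ - ℓ i w₂| ≤ L ^ 2 / (μ * n) + L ^ 2 / (μ * ((n : ℝ) - 1)) := by
  have hn0 : (0:ℝ) < (n:ℝ) := by
    have : (2:ℝ) ≤ (n:ℝ) := by exact_mod_cast hn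
    linarith
  have hn1 : (0:ℝ) < (n:ℝ) - 1 := by
    have : (2:ℝ) ≤ (n:ℝ) := by exact_mod_cast hn
    linarith
  have hL : 0 ≤ L := le_trans (norm_nonneg _) (hgrad i w₁)
  -- fderiv norms of the losses are bounded by L
  have hgrad' : ∀ j w, ‖fderiv ℝ (ℓ j) w‖ ≤ L := by
    intro j w
    have := hgrad j w
    rwa [norm_gradient_eq_norm_fderiv] at this
  -- derivatives of fS and fSi
  have hfS' : ∀ x, HasFDerivAt fS ((1/(n:ℝ)) • ∑ j, fderiv ℝ (ℓ j) x) x := by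
    intro x
    rw [hfS]
    exact (HasFDerivAt.fun_sum (fun j _ => ((hdiff j) x).hasFDerivAt)).const_mul _
  have hfSi' : ∀ x, HasFDerivAt fSi ((1/((n:ℝ)-1)) • ∑ j ∈ univ.erase i, fderiv ℝ (ℓ j) x) x := by
    intro x
    rw [hfSi]
    exact (HasFDerivAt.fun_sum (fun j _ => ((hdiff j) x).hasFDerivAt)).const_mul _
  -- fderiv = 0 at minimizers
  have hm1 : IsLocalMin fS w₁ := Filter.Eventually.of_forall fun y => hw₁ y
  have hm2 : IsLocalMin fSi w₂ := Filter.Eventually.of_forall fun y => hw₂ y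
  have hd1 : fderiv ℝ fS w₁ = 0 := hm1.fderiv_eq_zero
  have hd2 : fderiv ℝ fSi w₂ = 0 := hm2.fderiv_eq_zero
  -- sums of fderivs at minimizers
  have hsum1 : ∑ j, fderiv ℝ (ℓ j) w₁ = 0 := by
    have h := (hfS' w₁).fderiv
    rw [hd1] at h
    have := (smul_eq_zero.mp h.symm).resolve_left (by positivity)
    exact this
  have hsum2 : ∑ j ∈ univ.erase i, fderiv ℝ (ℓ j) w₂ = 0 := by
    have h := (hfSi' w₂).fderiv
    rw [hd2] at h
    exact (smul_eq_zero.mp h.symm).resolve_left (by positivity)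
  -- split full sum
  have hsplit : ∀ x, ∑ j ∈ univ.erase i, fderiv ℝ (ℓ j) x + fderiv ℝ (ℓ i) x
      = ∑ j, fderiv ℝ (ℓ j) x := fun x => Finset.sum_erase_add _ _ (mem_univ i)
  -- bound on ‖fderiv fS w₂‖
  have hb2 : ‖fderiv ℝ fS w₂‖ ≤ L / n := by
    have h := (hfS' w₂).fderiv
    rw [h, ← hsplit w₂, hsum2, zero_add, norm_smul]
    have : ‖(1/(n:ℝ))‖ = 1/(n:ℝ) := by
      rw [Real.norm_eq_abs, abs_of_pos (by positivity)]
    rw [this]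
    rw [div_eq_mul_inv L, mul_comm L]
    rw [one_div]
    exact mul_le_mul_of_nonneg_left (hgrad' i w₂) (by positivity)
  -- bound on ‖fderiv fSi w₁‖
  have hb1 : ‖fderiv ℝ fSi w₁‖ ≤ L / ((n:ℝ)-1) := by
    have h := (hfSi' w₁).fderiv
    have he : ∑ j ∈ univ.erase i, fderiv ℝ (ℓ j) w₁ = -(fderiv ℝ (ℓ i) w₁) := by
      have h0 := hsplit w₁
      rw [hsum1] at h0
      exact eq_neg_of_add_eq_zero_left h0
    rw [h, he, norm_smul, norm_neg]
    have : ‖(1/((n:ℝ)-1))‖ = 1/((n:ℝ)-1) := by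
      rw [Real.norm_eq_abs, abs_of_pos (by positivity)]
    rw [this, div_eq_mul_inv L, mul_comm L, one_div]
    exact mul_le_mul_of_nonneg_left (hgrad' i w₁) (by positivity)
  -- PL bounds
  have hA : μ * (fS w₂ - fS w₁) ≤ (L/n)^2 := by
    refine le_trans (hPLS w₂) ?_
    rw [norm_gradient_eq_norm_fderiv]
    exact pow_le_pow_left₀ (norm_nonneg _) hb2 2
  have hB : μ * (fSi w₁ - fSi w₂) ≤ (L/((n:ℝ)-1))^2 := by
    refine le_trans (hPLSi w₁) ?_
    rw [norm_gradient_eq_norm_fderiv]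
    exact pow_le_pow_left₀ (norm_nonneg _) hb1 2
  -- pointwise identity: ℓ i w = n * fS w - (n-1) * fSi w
  have hid : ∀ w, ℓ i w = (n:ℝ) * fS w - ((n:ℝ)-1) * fSi w := by
    intro w
    have hs : ∑ j ∈ univ.erase i, ℓ j w + ℓ i w = ∑ j, ℓ j w :=
      Finset.sum_erase_add _ _ (mem_univ i)
    rw [hfS, hfSi]
    simp only
    field_simp
    linarith [hs]
  have hA0 : 0 ≤ fS w₂ - fS w₁ := by linarith [hw₁ w₂]
  have hB0 : 0 ≤ fSi w₁ - fSi w₂ := by linarith [hw₂ w₁]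
  have h1 : (n:ℝ) * (fS w₂ - fS w₁) ≤ L^2/(μ*n) := by
    rw [le_div_iff₀ (by positivity)]
    rw [div_pow, le_div_iff₀ (by positivity)] at hA
    linarith [hA]
  have h2 : ((n:ℝ)-1) * (fSi w₁ - fSi w₂) ≤ L^2/(μ*((n:ℝ)-1)) := by
    rw [le_div_iff₀ (by positivity)]
    rw [div_pow, le_div_iff₀ (by positivity)] at hB
    linarith [hB]
  have hq1 : 0 ≤ (n:ℝ) * (fS w₂ - fS w₁) := mul_nonneg hn0.le hA0
  have hq2 : 0 ≤ ((n:ℝ)-1) * (fSi w₁ - fSi w₂) := mul_nonneg hn1.le hB0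
  rw [hid w₁, hid w₂, abs_le]
  constructor
  · linarith [h1, h2]
  · linarith [h1, h2, hq1, hq2]
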